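/- arXiv:cs/0306107 — 6 statements merged into one kernel-verified Lean document; each statement's English description precedes it below -/
import Mathlib

section
/- In a chain of bundles B_0 ↦ B_1 ↦ B_2 ↦ ..., where B_0 is the empty bundle and each step extends, per agent, at most one strand by at most one node, the height of B_n (the length of the longest causal path of → and ⇒ edges in B_n) is at most 2n. -/
namespace StrandPaper

/-- A strand space over a message set `M`: a type of strands, each with a trace,
a finite sequence of signed terms.  A signed term `(true, u)` is `+u` (send) and
`(false, u)` is `-u` (receive). -/
structure StrandSpace (M : Type) where
  Strand : Type
  tr : Strand → List (Bool × M)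

namespace StrandSpace

variable {M α : Type}

/-- Nodes are pairs of a strand and a (1-based) index. -/
abbrev Node (S : StrandSpace M) : Type := S.Strand × ℕ

/-- The signed term at a node (if the index is valid). -/
def term (S : StrandSpace M) (n : S.Node) : Option (Bool × M) := (S.tr n.1)[n.2 - 1]?

def IsNode (S : StrandSpace M) (n : S.Node) : Prop := 1 ≤ n.2 ∧ n.2 ≤ (S.tr n.1).length

/-- `n1 → n2`: `term n1 = +u` and `term n2 = -u`. -/
def SendsTo (S : StrandSpace M) (n1 n2 : S.Node) : Prop :=
  ∃ u, S.term n1 = some (true, u) ∧ S.term n2 = some (false, u)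

/-- `n1 ⇒ n2`: consecutive nodes of the same strand. -/
def SuccEdge (S : StrandSpace M) (n1 n2 : S.Node) : Prop :=
  n2.1 = n1.1 ∧ n2.2 = n1.2 + 1 ∧ S.IsNode n1 ∧ S.IsNode n2

/-- A (possibly infinite) bundle: a subgraph of `(N, → ∪ ⇒)` satisfying B2–B4:
every negative node has a unique incoming `→` edge, `⇒`-downward closure and
acyclicity. -/
structure Bundle (S : StrandSpace M) where
  nodes : Set S.Node
  comm : S.Node → S.Node → Prop
  nodes_valid : ∀ n ∈ nodes, S.IsNode n
  comm_mem : ∀ n1 n2, comm n1 n2 → n1 ∈ nodes ∧ n2 ∈ nodes ∧ S.SendsTo n1 n2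
  recv_unique : ∀ n2 ∈ nodes, ∀ u, S.term n2 = some (false, u) → ∃! n1, comm n1 n2
  succ_closed : ∀ n1 n2, S.SuccEdge n1 n2 → n2 ∈ nodes → n1 ∈ nodes
  acyclic : ∀ n, ¬ Relation.TransGen
      (fun m1 m2 => comm m1 m2 ∨ (S.SuccEdge m1 m2 ∧ m1 ∈ nodes ∧ m2 ∈ nodes)) n n

variable {S : StrandSpace M}

/-- The causal edges (`→` or `⇒`) of a bundle. -/
def Bundle.edge (B : S.Bundle) (n1 n2 : S.Node) : Prop :=
  B.comm n1 n2 ∨ (S.SuccEdge n1 n2 ∧ n1 ∈ B.nodes ∧ n2 ∈ B.nodes)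

/-- A causal path in a bundle. -/
def Bundle.CausalPath (B : S.Bundle) (l : List S.Node) : Prop :=
  l.Chain' B.edge ∧ ∀ n ∈ l, n ∈ B.nodes

/-- The height of the bundle is at most `k`: every causal path has at most `k+1` nodes
(i.e. length at most `k`). -/
def Bundle.HeightLE (B : S.Bundle) (k : ℕ) : Prop :=
  ∀ l, B.CausalPath l → l.length ≤ k + 1

def Bundle.FiniteHeight (B : S.Bundle) : Prop := ∃ k, B.HeightLE k

noncomputable def Bundle.height (B : S.Bundle) : ℕ := sInf {k | B.HeightLE k}

/-- The height of a strand in a bundle: the largest `i` with `⟨s,i⟩ ∈ B` (0 if none). -/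
noncomputable def Bundle.strandHeight (B : S.Bundle) (s : S.Strand) : ℕ :=
  sSup {i | (s, i) ∈ B.nodes}

/-- The empty bundle. -/
def emptyBundle (S : StrandSpace M) : S.Bundle where
  nodes := ∅
  comm := fun _ _ => False
  nodes_valid := fun n hn => absurd hn (Set.notMem_empty n)
  comm_mem := fun _ _ h => h.elim
  recv_unique := fun n hn => absurd hn (Set.notMem_empty n)
  succ_closed := fun _ n2 _ h => absurd h (Set.notMem_empty n2)
  acyclic := by
    intro n h
    cases h with
    | single h1 => rcases h1 with h1 | ⟨_, h3, _⟩
                   · exact h1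
                   · exact h3
    | tail _ h1 => rcases h1 with h1 | ⟨_, h3, _⟩
                   · exact h1
                   · exact h3

/-- `B1 ⊑_f B2`: `f` maps each strand prefix in `B1` into `B2`, preserving terms
and `→` edges. -/
def Embeds (f : S.Strand ≃ S.Strand) (B1 B2 : S.Bundle) : Prop :=
  (∀ s i, (s, i) ∈ B1.nodes → (f s, i) ∈ B2.nodes ∧ S.term (s, i) = S.term (f s, i)) ∧
  (∀ s i s' j, B1.comm (s, i) (s', j) → B2.comm (f s, i) (f s', j))

/-- `B1 ↦ B2` via the agent-respecting bijection `f`: `B1 ⊑_f B2` and, for each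
agent, at most one of its strands is extended, by at most (exactly) one node. -/
def StepVia (A : S.Strand → α) (f : S.Strand ≃ S.Strand) (B1 B2 : S.Bundle) : Prop :=
  (∀ s, A (f s) = A s) ∧ Embeds f B1 B2 ∧
  ∀ s s', A s = A s' →
    B2.strandHeight (f s) ≠ B1.strandHeight s →
    B2.strandHeight (f s') ≠ B1.strandHeight s' →
    s = s' ∧ B2.strandHeight (f s) = B1.strandHeight s + 1

/-- `B1 ↦ B2`. -/
def Step (A : S.Strand → α) (B1 B2 : S.Bundle) : Prop := ∃ f, StepVia A f B1 B2

/-- A chain `B_0 ↦ B_1 ↦ ⋯` starting from the empty bundle. -/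
structure Chain (A : S.Strand → α) where
  B : ℕ → S.Bundle
  init : B 0 = emptyBundle S
  step : ∀ k, Step A (B k) (B (k + 1))

/-- The event (if any) performed by agent `a` in the step `B1 ↦ B2`:
the term of the single new node on a strand of `a`. -/
noncomputable def stepEvent (A : S.Strand → α) (B1 B2 : S.Bundle) (a : α) :
    Option (Bool × M) := by
  classical
  exact if h : ∃ p : (S.Strand ≃ S.Strand) × S.Strand,
      StepVia A p.1 B1 B2 ∧ A p.2 = a ∧
      B2.strandHeight (p.1 p.2) = B1.strandHeight p.2 + 1 then
    S.term (h.choose.1 h.choose.2, B2.strandHeight (h.choose.1 h.choose.2))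
  else none

/-- The history of agent `a` at time `m` along a chain. -/
noncomputable def Chain.hist {A : S.Strand → α} (C : Chain (S := S) A) (a : α) :
    ℕ → List (Bool × M)
  | 0 => []
  | m + 1 => C.hist a m ++ (stepEvent A (C.B m) (C.B (m + 1)) a).toList

end StrandSpace

/-- A run: a local state (history of events) for each agent at each time.
`(true, u)` is `sent(u)` and `(false, u)` is `recv(u)`. -/
def Run (α M : Type) := ℕ → α → List (Bool × M)

variable {M α : Type}

/-- MP1–MP3 with respect to generating history sets `V`. -/
def MP (V : α → Set (List (Bool × M))) (r : Run α M) : Prop :=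
  (∀ a m, r m a ∈ V a) ∧
  (∀ a m u, (false, u) ∈ r m a → ∃ b, (true, u) ∈ r m b) ∧
  (∀ a, r 0 a = []) ∧
  (∀ a m, r (m + 1) a = r m a ∨ ∃ e, r (m + 1) a = r m a ++ [e])

/-- The strand system generated by history sets `V`: all runs satisfying MP1–3. -/
def generated (V : α → Set (List (Bool × M))) : Set (Run α M) := {r | MP V r}

def IsStrandSystem (R : Set (Run α M)) : Prop :=
  ∃ V : α → Set (List (Bool × M)), R = generated V

/-- The run associated with a chain. -/
noncomputable def StrandSpace.Chain.run {S : StrandSpace M} {A : S.Strand → α}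
    (C : StrandSpace.Chain (S := S) A) : Run α M := fun m a => C.hist a m

/-- `R(Σ, A, A)`: the translation of the strand space `S` under agent assignment `A`. -/
def systemOf (S : StrandSpace M) (A : S.Strand → α) : Set (Run α M) :=
  {r | ∃ C : StrandSpace.Chain (S := S) A, C.run = r}

end StrandPaper

open StrandPaper StrandPaper.StrandSpace


section Aux

variable {M α : Type} {S : StrandSpace M}

lemma node_down (B : S.Bundle) {s : S.Strand} {i j : ℕ} (hj : 1 ≤ j) (hij : j ≤ i)
    (hi : (s, i) ∈ B.nodes) : (s, j) ∈ B.nodes := by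
  induction i with
  | zero => omega
  | succ i ih =>
    rcases eq_or_lt_of_le hij with rfl | hlt
    · exact hi
    · have hii : (s, i) ∈ B.nodes := by
        apply B.succ_closed (s, i) (s, i + 1) _ hi
        have hv := B.nodes_valid _ hi
        exact ⟨rfl, rfl, ⟨by omega, by have := hv.2; simp at this ⊢; omega⟩, hv⟩
      exact ih (by omega) hii

lemma bddAbove_strand (B : S.Bundle) (s : S.Strand) :
    BddAbove {i | (s, i) ∈ B.nodes} :=
  ⟨(S.tr s).length, fun i hi => (B.nodes_valid _ hi).2⟩

lemma le_strandHeight (B : S.Bundle) {s : S.Strand} {i : ℕ} (h : (s, i) ∈ B.nodes) :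
    i ≤ B.strandHeight s := le_csSup (bddAbove_strand B s) h

lemma strandHeight_mem (B : S.Bundle) {s : S.Strand} (h : 1 ≤ B.strandHeight s) :
    (s, B.strandHeight s) ∈ B.nodes := by
  have hne : {i | (s, i) ∈ B.nodes}.Nonempty := by
    by_contra hne
    rw [Set.not_nonempty_iff_eq_empty] at hne
    rw [Bundle.strandHeight, hne, csSup_empty] at h
    exact absurd h (by simp)
  exact Nat.sSup_mem hne (bddAbove_strand B s)

lemma mem_of_le_strandHeight (B : S.Bundle) {s : S.Strand} {i : ℕ} (h1 : 1 ≤ i)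
    (h2 : i ≤ B.strandHeight s) : (s, i) ∈ B.nodes :=
  node_down B h1 h2 (strandHeight_mem B (le_trans h1 h2))

variable {A : S.Strand → α} {f : S.Strand ≃ S.Strand} {B1 B2 : S.Bundle}

lemma height_mono (h : StepVia A f B1 B2) (s : S.Strand) :
    B1.strandHeight s ≤ B2.strandHeight (f s) := by
  rcases Nat.eq_zero_or_pos (B1.strandHeight s) with h0 | h0
  · omega
  · exact le_strandHeight B2 ((h.2.1.1 s _ (strandHeight_mem B1 h0)).1)

lemma height_step (h : StepVia A f B1 B2) (s : S.Strand) :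
    B2.strandHeight (f s) ≤ B1.strandHeight s + 1 := by
  by_cases he : B2.strandHeight (f s) = B1.strandHeight s
  · omega
  · have := (h.2.2 s s rfl he he).2
    omega

/-- "old" nodes of `B2` pull back into `B1`. -/
lemma old_mem (h : StepVia A f B1 B2) {m : S.Node} (hm : m ∈ B2.nodes)
    (hold : m.2 ≤ B1.strandHeight (f.symm m.1)) :
    (f.symm m.1, m.2) ∈ B1.nodes :=
  mem_of_le_strandHeight B1 (B2.nodes_valid _ hm).1 hold

/-- Any comm edge into (the image of) an old node comes from (the image of) an old node. -/
lemma comm_pullback (h : StepVia A f B1 B2) {x n2 : S.Node}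
    (hn2 : n2 ∈ B1.nodes) (hc : B2.comm x (f n2.1, n2.2)) :
    ∃ n1 ∈ B1.nodes, x = (f n1.1, n1.2) ∧ B1.comm n1 n2 := by
  obtain ⟨hx2, hfn2, u, hu1, hu2⟩ := B2.comm_mem _ _ hc
  have hterm := (h.2.1.1 n2.1 n2.2 hn2).2
  have htn2 : S.term (n2.1, n2.2) = some (false, u) := by rw [hterm]; exact hu2
  obtain ⟨n1, hn1c, hn1u⟩ := B1.recv_unique (n2.1, n2.2) hn2 u htn2
  have hn1mem := (B1.comm_mem _ _ hn1c).1
  have hB2c : B2.comm (f n1.1, n1.2) (f n2.1, n2.2) := h.2.1.2 n1.1 n1.2 n2.1 n2.2 hn1c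
  obtain ⟨y, hyc, hyu⟩ := B2.recv_unique (f n2.1, n2.2) hfn2 u (by rw [← hterm]; exact htn2)
  have hx : x = y := hyu x hc
  have hf : (⟨f n1.1, n1.2⟩ : S.Node) = y := hyu _ hB2c
  exact ⟨n1, hn1mem, by rw [hx, ← hf], hn1c⟩

/-- No succ edge out of a new (top) node. -/
lemma new_no_succ (h : StepVia A f B1 B2) {m m' : S.Node}
    (hm : m ∈ B2.nodes) (hnew : ¬ m.2 ≤ B1.strandHeight (f.symm m.1))
    (hsu : S.SuccEdge m m') (hm' : m' ∈ B2.nodes) : False := by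
  have h1 : m'.2 ≤ B2.strandHeight m'.1 := le_strandHeight B2 hm'
  have h2 : B2.strandHeight (f (f.symm m.1)) ≤ B1.strandHeight (f.symm m.1) + 1 :=
    height_step h (f.symm m.1)
  rw [Equiv.apply_symm_apply] at h2
  rw [hsu.1] at h1
  have h3 := hsu.2.1
  omega

/-- Edges out of new nodes only reach new nodes. -/
lemma new_closed (h : StepVia A f B1 B2) {m m' : S.Node}
    (hm : m ∈ B2.nodes) (hnew : ¬ m.2 ≤ B1.strandHeight (f.symm m.1))
    (he : B2.edge m m') : ¬ m'.2 ≤ B1.strandHeight (f.symm m'.1) := by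
  intro hold
  rcases he with hc | ⟨hsu, _, hm'2⟩
  · have hm'mem := (B2.comm_mem _ _ hc).2.1
    have hmem1 : (f.symm m'.1, m'.2) ∈ B1.nodes := old_mem h hm'mem hold
    have hc' : B2.comm m (f (f.symm m'.1), m'.2) := by
      rw [Equiv.apply_symm_apply]; exact hc
    obtain ⟨n1, hn1, hx, _⟩ := comm_pullback h hmem1 hc'
    apply hnew
    rw [hx]
    simp only [Equiv.symm_apply_apply]
    exact le_strandHeight B1 hn1
  · exact new_no_succ h hm hnew hsu hm'2

lemma edge_mem (he : B2.edge m m') : m ∈ B2.nodes ∧ m' ∈ B2.nodes := by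
  rcases he with hc | ⟨_, h1, h2⟩
  · exact ⟨(B2.comm_mem _ _ hc).1, (B2.comm_mem _ _ hc).2.1⟩
  · exact ⟨h1, h2⟩

/-- No causal path has three nodes once it starts at a new node. -/
lemma no_three_new (h : StepVia A f B1 B2) {m1 m2 m3 : S.Node}
    (hm1 : m1 ∈ B2.nodes) (h1new : ¬ m1.2 ≤ B1.strandHeight (f.symm m1.1))
    (e12 : B2.edge m1 m2) (e23 : B2.edge m2 m3) : False := by
  have hm2 := (edge_mem e12).2
  have h2new : ¬ m2.2 ≤ B1.strandHeight (f.symm m2.1) := new_closed h hm1 h1new e12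
  rcases e12 with hc12 | ⟨hsu, _, hmm⟩
  · obtain ⟨_, _, u, _, hneg⟩ := B2.comm_mem _ _ hc12
    rcases e23 with hc23 | ⟨hsu23, hn2, hn3⟩
    · obtain ⟨_, _, u', hpos, _⟩ := B2.comm_mem _ _ hc23
      rw [hneg] at hpos
      simp at hpos
    · exact new_no_succ h hm2 h2new hsu23 hn3
  · exact new_no_succ h hm1 h1new hsu hmm

lemma new_path_short (h : StepVia A f B1 B2) (l : List S.Node)
    (hc : l.Chain' B2.edge) (hmem : ∀ m ∈ l, m ∈ B2.nodes)
    (m0 : S.Node) (hh : l.head? = some m0)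
    (hn : ¬ m0.2 ≤ B1.strandHeight (f.symm m0.1)) : l.length ≤ 2 := by
  cases l with
  | nil => simp
  | cons a t =>
    have ha : a = m0 := by simpa using hh
    subst ha
    cases t with
    | nil => simp
    | cons b t' =>
      cases t' with
      | nil => simp
      | cons c t'' =>
        exfalso
        simp only [List.Chain'] at hc; rw [List.isChain_cons_cons] at hc
        obtain ⟨e12, hc⟩ := hc
        rw [List.isChain_cons_cons] at hc
        obtain ⟨e23, -⟩ := hc
        exact no_three_new h (hmem a (by simp)) hn e12 e23

lemma old_chain (h : StepVia A f B1 B2) :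
    ∀ l : List S.Node, l.Chain' B2.edge →
      (∀ m ∈ l, m ∈ B2.nodes ∧ m.2 ≤ B1.strandHeight (f.symm m.1)) →
      B1.CausalPath (l.map fun m => (f.symm m.1, m.2)) := by
  intro l
  induction l with
  | nil => intro _ _; exact ⟨by simp [List.Chain'], by simp⟩
  | cons a t ih =>
    intro hc hmem
    have hamem : (f.symm a.1, a.2) ∈ B1.nodes :=
      old_mem h (hmem a (by simp)).1 (hmem a (by simp)).2
    have hrest := ih (hc.tail) (fun m hm => hmem m (by simp [hm]))
    refine ⟨?_, ?_⟩
    · cases t with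
      | nil => simp [List.Chain']
      | cons b t' =>
        simp only [List.map_cons, List.Chain', List.isChain_cons_cons]
        constructor
        · -- edge from (f.symm a.1, a.2) to (f.symm b.1, b.2) in B1
          simp only [List.Chain', List.isChain_cons_cons] at hc
          have he := hc.1
          have hbmem : (f.symm b.1, b.2) ∈ B1.nodes :=
            old_mem h (hmem b (by simp)).1 (hmem b (by simp)).2
          rcases he with hcm | ⟨hsu, _, _⟩
          · left
            have hc' : B2.comm a (f (f.symm b.1), b.2) := by
              rw [Equiv.apply_symm_apply]; exact hcm
            obtain ⟨n1, hn1, hx, hcomm⟩ := comm_pullback h hbmem hc'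
            have : (f.symm a.1, a.2) = n1 := by
              rw [hx]; simp only [Equiv.symm_apply_apply]
            rw [this]
            exact hcomm
          · right
            refine ⟨⟨by simp [hsu.1], by simp [hsu.2.1], ?_, ?_⟩, hamem, hbmem⟩
            · exact B1.nodes_valid _ hamem
            · exact B1.nodes_valid _ hbmem
        · rw [List.map_cons] at hrest
          exact hrest.1
    · intro n hn
      rw [List.map_cons] at hn
      rcases List.mem_cons.mp hn with rfl | hn
      · exact hamem
      · exact hrest.2 n hn

lemma step_heightLE (hs : Step A B1 B2) {k : ℕ} (hk : B1.HeightLE k) :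
    B2.HeightLE (k + 2) := by
  obtain ⟨f, h⟩ := hs
  intro l hl
  classical
  set p : S.Node → Bool := fun m => decide (m.2 ≤ B1.strandHeight (f.symm m.1)) with hp
  have hsplit := List.takeWhile_append_dropWhile (p := p) (l := l)
  set l1 := l.takeWhile p with hl1
  set l2 := l.dropWhile p with hl2
  have hlen : l.length = l1.length + l2.length := by
    rw [← hsplit, List.length_append]
  have hmem : ∀ m ∈ l, m ∈ B2.nodes := hl.2
  -- l1 bound
  have hl1chain : l1.Chain' B2.edge := hl.1.prefix (List.takeWhile_prefix p)
  have hl1old : ∀ m ∈ l1, m ∈ B2.nodes ∧ m.2 ≤ B1.strandHeight (f.symm m.1) := by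
    intro m hm
    refine ⟨hmem m ((List.takeWhile_prefix p).subset hm), ?_⟩
    have := List.mem_takeWhile_imp hm
    simpa [hp] using this
  have hpath1 := old_chain h l1 hl1chain hl1old
  have hb1 : l1.length ≤ k + 1 := by
    have := hk _ hpath1
    simpa using this
  -- l2 bound
  have hb2 : l2.length ≤ 2 := by
    cases hl2e : l2 with
    | nil => simp
    | cons m0 t =>
      have hchain2 : l2.Chain' B2.edge := hl.1.suffix (List.dropWhile_suffix p)
      have hmem2 : ∀ m ∈ l2, m ∈ B2.nodes := fun m hm =>
        hmem m ((List.dropWhile_suffix p).subset hm)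
      have hnotp : ¬ (p m0 = true) := by
        have := List.head?_dropWhile_not p l
        rw [← hl2, hl2e] at this
        simp at this
        exact fun hb => by simp [this] at hb
      have hnew : ¬ m0.2 ≤ B1.strandHeight (f.symm m0.1) := by
        simpa [hp] using hnotp
      rw [← hl2e]
      exact new_path_short h l2 hchain2 hmem2 m0 (by rw [hl2e]; rfl) hnew
  omega

end Aux

/-- In a chain `B_0 ↦ B_1 ↦ ⋯` starting from the empty bundle, where each
step extends, per agent, at most one strand by at most one node, the height of `B_n`
(the length of the longest causal path along `→` and `⇒` edges) is at most `2n`. -/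
theorem chain_height_le_two_n {M α : Type} {S : StrandSpace M} {A : S.Strand → α}
    (C : Chain (S := S) A) (n : ℕ) :
    (C.B n).HeightLE (2 * n) := by
  induction n with
  | zero =>
    intro l hl
    rw [C.init] at hl
    cases l with
    | nil => simp
    | cons a t => exact absurd (hl.2 a (by simp)) (Set.notMem_empty a)
  | succ n ih =>
    have h2 : (C.B (n + 1)).HeightLE (2 * n + 2) := step_heightLE (C.step n) ih
    have he : 2 * (n + 1) = 2 * n + 2 := by ring
    rw [he]
    exact h2
end

section
/- If each strand is assigned to a distinct agent, then for every bundle B of finite height there exist bundles B_1, ..., B_k such that B_0 ↦ B_1 ↦ ... ↦ B_k ↦ B, where B_0 is the empty bundle. That is, every finite-height bundle is reachable by a finite chain from the empty bundle. -/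
open StrandPaper StrandPaper.StrandSpace

namespace StrandPaper.StrandSpace

variable {M : Type} {S : StrandSpace M}

/-- Depth of a node is at most `k`: every causal path ending at `n` has length `≤ k`. -/
def Bundle.DepthLE (B : S.Bundle) (n : S.Node) (k : ℕ) : Prop :=
  ∀ l, B.CausalPath l → l.getLast? = some n → l.length ≤ k

lemma Bundle.edge_mem {B : S.Bundle} {n1 n2 : S.Node} (h : B.edge n1 n2) :
    n1 ∈ B.nodes ∧ n2 ∈ B.nodes := by
  rcases h with h | ⟨_, h1, h2⟩
  · exact ⟨(B.comm_mem _ _ h).1, (B.comm_mem _ _ h).2.1⟩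
  · exact ⟨h1, h2⟩

lemma Bundle.depth_core {B : S.Bundle} {n1 n2 : S.Node} {k : ℕ} (he : B.edge n1 n2)
    (h2 : B.DepthLE n2 k) : ∀ l, B.CausalPath l → l.getLast? = some n1 → l.length + 1 ≤ k := by
  intro l hl hlast
  have hpath : B.CausalPath (l ++ [n2]) := by
    refine ⟨List.isChain_append.2 ⟨hl.1, List.isChain_singleton _, ?_⟩, ?_⟩
    · intro x hx y hy
      simp only [List.head?_cons, Option.mem_def, Option.some.injEq] at hy
      subst hy
      rw [hlast] at hx
      simp only [Option.mem_def, Option.some.injEq] at hx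
      subst hx
      exact he
    · intro n hn
      rcases List.mem_append.1 hn with h | h
      · exact hl.2 n h
      · simp only [List.mem_singleton] at h
        subst h
        exact (Bundle.edge_mem he).2
  have := h2 (l ++ [n2]) hpath (by simp)
  simpa using this

lemma Bundle.depthLE_of_edge {B : S.Bundle} {n1 n2 : S.Node} {k : ℕ} (he : B.edge n1 n2)
    (h2 : B.DepthLE n2 k) : B.DepthLE n1 k := by
  intro l hl hlast
  have := Bundle.depth_core he h2 l hl hlast
  omega

lemma Bundle.depthLE_of_edge_succ {B : S.Bundle} {n1 n2 : S.Node} {k : ℕ} (he : B.edge n1 n2)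
    (h2 : B.DepthLE n2 (k + 1)) : B.DepthLE n1 k := by
  intro l hl hlast
  have := Bundle.depth_core he h2 l hl hlast
  omega

lemma Bundle.not_depthLE_zero {B : S.Bundle} {n : S.Node} (hn : n ∈ B.nodes) :
    ¬ B.DepthLE n 0 := by
  intro hd
  have := hd [n] ⟨List.isChain_singleton n, by simpa⟩ (by simp)
  simp at this

lemma Bundle.depthLE_mono {B : S.Bundle} {n : S.Node} {k k' : ℕ} (hk : k ≤ k')
    (h : B.DepthLE n k) : B.DepthLE n k' := fun l hl hlast => le_trans (h l hl hlast) hk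

/-- The truncation of a bundle to nodes of depth at most `k`. -/
def Bundle.trunc (B : S.Bundle) (k : ℕ) : S.Bundle where
  nodes := {n | n ∈ B.nodes ∧ B.DepthLE n k}
  comm := fun n1 n2 => B.comm n1 n2 ∧ (n1 ∈ B.nodes ∧ B.DepthLE n1 k) ∧
    (n2 ∈ B.nodes ∧ B.DepthLE n2 k)
  nodes_valid := fun n hn => B.nodes_valid n hn.1
  comm_mem := fun n1 n2 h => ⟨h.2.1, h.2.2, (B.comm_mem _ _ h.1).2.2⟩
  recv_unique := fun n2 hn2 u hu => by
    obtain ⟨n1, hc, huniq⟩ := B.recv_unique n2 hn2.1 u hu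
    refine ⟨n1, ⟨hc, ⟨(B.comm_mem _ _ hc).1, ?_⟩, hn2⟩, fun y hy => huniq y hy.1⟩
    exact Bundle.depthLE_of_edge (Or.inl hc) hn2.2
  succ_closed := fun n1 n2 hs hn2 => by
    have hn1 : n1 ∈ B.nodes := B.succ_closed n1 n2 hs hn2.1
    exact ⟨hn1, Bundle.depthLE_of_edge (Or.inr ⟨hs, hn1, hn2.1⟩) hn2.2⟩
  acyclic := fun n h => B.acyclic n (by
    refine Relation.TransGen.mono ?_ n n h
    rintro a b (hc | ⟨hs, ha, hb⟩)
    · exact Or.inl hc.1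
    · exact Or.inr ⟨hs, ha.1, hb.1⟩)

lemma Bundle.strand_bdd (B : S.Bundle) (s : S.Strand) :
    BddAbove {i | (s, i) ∈ B.nodes} :=
  ⟨(S.tr s).length, fun i hi => (B.nodes_valid _ hi).2⟩

lemma Bundle.trunc_nodes_mono (B : S.Bundle) {k k' : ℕ} (hk : k ≤ k') :
    (B.trunc k).nodes ⊆ (B.trunc k').nodes :=
  fun _ hn => ⟨hn.1, Bundle.depthLE_mono hk hn.2⟩

lemma Bundle.trunc_height_mono (B : S.Bundle) (s : S.Strand) {k k' : ℕ} (hk : k ≤ k') :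
    (B.trunc k).strandHeight s ≤ (B.trunc k').strandHeight s := by
  unfold Bundle.strandHeight
  rcases Set.eq_empty_or_nonempty {i | (s, i) ∈ (B.trunc k).nodes} with he | hne
  · rw [he, csSup_empty]; exact Nat.zero_le _
  · exact csSup_le_csSup (Bundle.strand_bdd _ s) hne
      (fun i hi => B.trunc_nodes_mono hk hi)

lemma Bundle.trunc_height_succ_le (B : S.Bundle) (s : S.Strand) (k : ℕ) :
    (B.trunc (k + 1)).strandHeight s ≤ (B.trunc k).strandHeight s + 1 := by
  unfold Bundle.strandHeight
  rcases Set.eq_empty_or_nonempty {i | (s, i) ∈ (B.trunc (k + 1)).nodes} with he | hne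
  · rw [he, csSup_empty]; exact Nat.zero_le _
  · set h := sSup {i | (s, i) ∈ (B.trunc (k + 1)).nodes} with hh
    have hmem : (s, h) ∈ (B.trunc (k + 1)).nodes :=
      Nat.sSup_mem hne (Bundle.strand_bdd _ s)
    have hvalid := B.nodes_valid _ hmem.1
    by_cases h2 : h ≤ 1
    · omega
    · push_neg at h2
      -- show h - 1 is in the truncation at level k
      have hsucc : S.SuccEdge (s, h - 1) (s, h) := by
        refine ⟨rfl, by simp; omega, ⟨by simp; omega, ?_⟩, hvalid⟩
        have := hvalid.2
        simp only at this ⊢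
        omega
      have hn1 : (s, h - 1) ∈ B.nodes := B.succ_closed _ _ hsucc hmem.1
      have hd1 : B.DepthLE (s, h - 1) k :=
        Bundle.depthLE_of_edge_succ (Or.inr ⟨hsucc, hn1, hmem.1⟩) hmem.2
      have : h - 1 ≤ sSup {i | (s, i) ∈ (B.trunc k).nodes} :=
        le_csSup (Bundle.strand_bdd _ s) ⟨hn1, hd1⟩
      omega

lemma Bundle.ext' {B1 B2 : S.Bundle} (h1 : B1.nodes = B2.nodes)
    (h2 : B1.comm = B2.comm) : B1 = B2 := by
  cases B1; cases B2
  cases h1; cases h2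
  rfl

lemma Bundle.trunc_zero (B : S.Bundle) : B.trunc 0 = emptyBundle S := by
  refine Bundle.ext' ?_ ?_
  · ext n
    simp only [Bundle.trunc]
    constructor
    · rintro ⟨hn, hd⟩
      exact absurd hd (Bundle.not_depthLE_zero hn)
    · intro hn
      exact absurd hn (Set.notMem_empty n)
  · funext n1 n2
    apply propext
    constructor
    · rintro ⟨_, ⟨hn, hd⟩, _⟩
      exact absurd hd (Bundle.not_depthLE_zero hn)
    · intro hF
      exact hF.elim

lemma Bundle.trunc_eq_self {B : S.Bundle} {K : ℕ} (hK : B.HeightLE K) :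
    B.trunc (K + 1) = B := by
  have hdep : ∀ n ∈ B.nodes, B.DepthLE n (K + 1) := fun n _ l hl _ => hK l hl
  refine Bundle.ext' ?_ ?_
  · ext n
    exact ⟨fun h => h.1, fun h => ⟨h, hdep n h⟩⟩
  · funext n1 n2
    apply propext
    constructor
    · exact fun h => h.1
    · intro hc
      obtain ⟨h1, h2, _⟩ := B.comm_mem _ _ hc
      exact ⟨hc, ⟨h1, hdep _ h1⟩, ⟨h2, hdep _ h2⟩⟩

lemma Bundle.trunc_step (B : S.Bundle) (k : ℕ) :
    Step (id : S.Strand → S.Strand) (B.trunc k) (B.trunc (k + 1)) := by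
  refine ⟨Equiv.refl _, fun s => rfl, ⟨?_, ?_⟩, ?_⟩
  · intro s i hn
    exact ⟨B.trunc_nodes_mono (Nat.le_succ k) hn, rfl⟩
  · intro s i s' j hc
    exact ⟨hc.1, ⟨hc.2.1.1, Bundle.depthLE_mono (Nat.le_succ k) hc.2.1.2⟩,
      ⟨hc.2.2.1, Bundle.depthLE_mono (Nat.le_succ k) hc.2.2.2⟩⟩
  · intro s s' hss' hne _
    have hs : s = s' := hss'
    subst hs
    have hle := B.trunc_height_mono s (by omega : k ≤ k + 1)
    have hle2 := B.trunc_height_succ_le s k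
    have hne' : (B.trunc (k + 1)).strandHeight s ≠ (B.trunc k).strandHeight s := hne
    refine ⟨rfl, ?_⟩
    show (B.trunc (k + 1)).strandHeight s = (B.trunc k).strandHeight s + 1
    omega

end StrandPaper.StrandSpace



/-- With each strand its own agent (identity agent assignment), every
bundle of finite height is reachable by a finite chain from the empty bundle: there
are bundles `B_1, …, B_k` with `B_0 ↦ B_1 ↦ ⋯ ↦ B_k ↦ B` (equivalently, `B` occurs
in some chain). -/
theorem finite_height_bundle_reachable {M : Type} (S : StrandSpace M) (B : S.Bundle)
    (h : B.FiniteHeight) :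
    ∃ (C : Chain (S := S) (id : S.Strand → S.Strand)) (m : ℕ), C.B m = B := by
  obtain ⟨K, hK⟩ := h
  refine ⟨⟨fun m => B.trunc m, B.trunc_zero, fun k => B.trunc_step k⟩, K + 1, ?_⟩
  exact Bundle.trunc_eq_self hK
end

section
/- Given a bundle B of finite nonzero height, the subgraph B' obtained by removing, from each strand prefix in B, its last node whenever that last node is either a receive node or a send node with no corresponding receive in B, is again a bundle, satisfies B' ↦ B (when each strand is its own agent), and has height strictly less than the height of B. -/
open StrandPaper StrandPaper.StrandSpace

/-- A node is removable from `B` if it is the last node of its strand's prefix in `B`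
and is either a receive node or a send node with no corresponding receive in `B`. -/
def Removable {M : Type} {S : StrandSpace M} (B : S.Bundle) (n : S.Node) : Prop :=
  n ∈ B.nodes ∧ n.2 = B.strandHeight n.1 ∧
  ((∃ u, S.term n = some (false, u)) ∨
   (∃ u, S.term n = some (true, u) ∧ ¬ ∃ n' : S.Node, B.comm n n'))

namespace ShrinkAux

variable {M : Type} {S : StrandSpace M} (B : S.Bundle)

lemma strandSet_bdd (s : S.Strand) : BddAbove {i | (s, i) ∈ B.nodes} :=
  ⟨(S.tr s).length, fun i hi => (B.nodes_valid _ hi).2⟩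

lemma le_strandHeight {s : S.Strand} {i : ℕ} (h : (s, i) ∈ B.nodes) :
    i ≤ B.strandHeight s :=
  le_csSup (strandSet_bdd B s) h

lemma top_mem {s : S.Strand} (hne : {i | (s, i) ∈ B.nodes}.Nonempty) :
    (s, B.strandHeight s) ∈ B.nodes :=
  Nat.sSup_mem hne (strandSet_bdd B s)

lemma interval : ∀ (k : ℕ) {s : S.Strand} {i : ℕ},
    (s, i + k) ∈ B.nodes → 1 ≤ i → (s, i) ∈ B.nodes := by
  intro k
  induction k with
  | zero => intro s i h _; exact h
  | succ k ih =>
    intro s i h h1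
    have hv := B.nodes_valid _ h
    have h2 : (s, i + k) ∈ B.nodes := by
      apply B.succ_closed (s, i + k) (s, i + k + 1)
      · exact ⟨rfl, rfl, ⟨by omega, by have := hv.2; simp at this ⊢; omega⟩, hv⟩
      · exact h
    exact ih h2 h1

lemma mem_of_le {s : S.Strand} {i j : ℕ} (hj : (s, j) ∈ B.nodes)
    (h1 : 1 ≤ i) (hij : i ≤ j) : (s, i) ∈ B.nodes := by
  have hjj : j = i + (j - i) := by omega
  rw [hjj] at hj
  exact interval B (j - i) hj h1

lemma term_some {n : S.Node} (h : n ∈ B.nodes) : ∃ p, S.term n = some p := by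
  obtain ⟨hv1, hv2⟩ := B.nodes_valid _ h
  have hlt : n.2 - 1 < (S.tr n.1).length := by omega
  exact ⟨(S.tr n.1)[n.2 - 1], List.getElem?_eq_getElem hlt⟩

lemma extend {n : S.Node} (hn : n ∈ B.nodes) (hr : ¬ Removable B n) :
    ∃ n', B.edge n n' ∧ n' ∈ B.nodes := by
  by_cases htop : n.2 = B.strandHeight n.1
  · obtain ⟨⟨b, u⟩, hu⟩ := term_some B hn
    cases b with
    | false => exact absurd ⟨hn, htop, Or.inl ⟨u, hu⟩⟩ hr
    | true =>
      by_cases hc : ∃ n', B.comm n n'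
      · obtain ⟨n', hc⟩ := hc
        exact ⟨n', Or.inl hc, (B.comm_mem _ _ hc).2.1⟩
      · exact absurd ⟨hn, htop, Or.inr ⟨u, hu, hc⟩⟩ hr
  · have hle := le_strandHeight B (show (n.1, n.2) ∈ B.nodes from hn)
    have hne : {i | (n.1, i) ∈ B.nodes}.Nonempty := ⟨n.2, hn⟩
    have hv := B.nodes_valid _ hn
    have hmem : (n.1, n.2 + 1) ∈ B.nodes :=
      mem_of_le B (top_mem B hne) (by omega) (by omega)
    refine ⟨(n.1, n.2 + 1), Or.inr ⟨⟨rfl, rfl, hv, B.nodes_valid _ hmem⟩, hn, hmem⟩, hmem⟩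

/-- The shrunk bundle. -/
def shrunk : S.Bundle where
  nodes := B.nodes \ {n | Removable B n}
  comm n1 n2 := B.comm n1 n2 ∧ n1 ∈ B.nodes \ {n | Removable B n} ∧
    n2 ∈ B.nodes \ {n | Removable B n}
  nodes_valid n hn := B.nodes_valid n hn.1
  comm_mem n1 n2 h := ⟨h.2.1, h.2.2, (B.comm_mem _ _ h.1).2.2⟩
  recv_unique := by
    intro n2 hn2 u hu
    obtain ⟨n1, h1, huniq⟩ := B.recv_unique n2 hn2.1 u hu
    have hn1m : n1 ∈ B.nodes := (B.comm_mem _ _ h1).1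
    have hn1r : ¬ Removable B n1 := by
      rintro ⟨_, _, ⟨v, hv⟩ | ⟨v, hv, hno⟩⟩
      · obtain ⟨w, hw1, hw2⟩ := (B.comm_mem _ _ h1).2.2
        rw [hv] at hw1; simp at hw1
      · exact hno ⟨n2, h1⟩
    refine ⟨n1, ⟨h1, ⟨hn1m, hn1r⟩, hn2⟩, ?_⟩
    intro m hm
    exact huniq m hm.1
  succ_closed := by
    intro n1 n2 hs hn2
    have hn1 : n1 ∈ B.nodes := B.succ_closed n1 n2 hs hn2.1
    refine ⟨hn1, ?_⟩
    rintro ⟨_, htop, _⟩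
    obtain ⟨e1, e2, _, _⟩ := hs
    have h2 := le_strandHeight B (show (n2.1, n2.2) ∈ B.nodes from hn2.1)
    rw [e1, e2] at h2
    omega
  acyclic := by
    intro n h
    refine B.acyclic n (Relation.TransGen.mono ?_ n n h)
    rintro a b (⟨hc, _, _⟩ | ⟨hs, ha, hb⟩)
    · exact Or.inl hc
    · exact Or.inr ⟨hs, ha.1, hb.1⟩

lemma edge_mono {n1 n2 : S.Node} (h : (shrunk B).edge n1 n2) : B.edge n1 n2 := by
  rcases h with ⟨hc, _, _⟩ | ⟨hs, ha, hb⟩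
  · exact Or.inl hc
  · exact Or.inr ⟨hs, ha.1, hb.1⟩

lemma shrunk_strandHeight (s : S.Strand) :
    B.strandHeight s = (shrunk B).strandHeight s ∨
    B.strandHeight s = (shrunk B).strandHeight s + 1 := by
  by_cases hne : {i | (s, i) ∈ B.nodes}.Nonempty
  · have htop : (s, B.strandHeight s) ∈ B.nodes := top_mem B hne
    have h1 : 1 ≤ B.strandHeight s := (B.nodes_valid _ htop).1
    by_cases hrem : Removable B (s, B.strandHeight s)
    · right
      by_cases hne' : {i | (s, i) ∈ (shrunk B).nodes}.Nonempty
      · have htop' : (s, (shrunk B).strandHeight s) ∈ (shrunk B).nodes :=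
          top_mem (shrunk B) hne'
        have hle : (shrunk B).strandHeight s ≤ B.strandHeight s :=
          le_strandHeight B htop'.1
        have hneq : (shrunk B).strandHeight s ≠ B.strandHeight s := by
          intro e
          exact htop'.2 (by rw [e]; exact hrem)
        have h1' : 1 ≤ (shrunk B).strandHeight s := (B.nodes_valid _ htop'.1).1
        have hm : (s, B.strandHeight s - 1) ∈ B.nodes :=
          mem_of_le B htop (by omega) (by omega)
        have hm' : (s, B.strandHeight s - 1) ∈ (shrunk B).nodes := by
          refine ⟨hm, fun hr => ?_⟩
          have := hr.2.1
          simp only at this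
          omega
        have hge : B.strandHeight s - 1 ≤ (shrunk B).strandHeight s :=
          le_strandHeight (shrunk B) hm'
        omega
      · have hT' : (shrunk B).strandHeight s = 0 := by
          have e : {i | (s, i) ∈ (shrunk B).nodes} = ∅ :=
            Set.not_nonempty_iff_eq_empty.mp hne'
          show sSup {i | (s, i) ∈ (shrunk B).nodes} = 0
          rw [e]
          exact csSup_empty
        have hlt2 : ¬ (2 ≤ B.strandHeight s) := by
          intro h2
          refine hne' ⟨1, mem_of_le B htop le_rfl (by omega), fun hr => ?_⟩
          have := hr.2.1
          simp only at this
          omega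
        omega
    · left
      have heq : {i | (s, i) ∈ (shrunk B).nodes} = {i | (s, i) ∈ B.nodes} := by
        ext i
        constructor
        · exact fun h => h.1
        · intro hi
          refine ⟨hi, fun hr => ?_⟩
          have hih : i = B.strandHeight s := hr.2.1
          exact hrem (hih ▸ hr)
      show sSup {i | (s, i) ∈ B.nodes} = sSup {i | (s, i) ∈ (shrunk B).nodes}
      rw [heq]
  · left
    have e : {i | (s, i) ∈ B.nodes} = ∅ := Set.not_nonempty_iff_eq_empty.mp hne
    have e' : {i | (s, i) ∈ (shrunk B).nodes} = ∅ := by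
      apply Set.eq_empty_of_subset_empty
      rw [← e]
      exact fun i hi => hi.1
    show sSup {i | (s, i) ∈ B.nodes} = sSup {i | (s, i) ∈ (shrunk B).nodes}
    rw [e, e']

lemma step_shrunk : Step (id : S.Strand → S.Strand) (shrunk B) B := by
  refine ⟨Equiv.refl _, fun s => rfl, ⟨?_, ?_⟩, ?_⟩
  · intro s i h; exact ⟨h.1, rfl⟩
  · intro s i s' j h; exact h.1
  · intro s s' hss h1 h2
    have hss' : s = s' := hss
    subst hss'
    refine ⟨rfl, ?_⟩
    rcases shrunk_strandHeight B s with e | e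
    · exact absurd e h1
    · exact e

lemma height_lt (hfin : B.FiniteHeight) (hnz : 0 < B.height) :
    (shrunk B).height < B.height := by
  have hmem : B.HeightLE B.height := Nat.sInf_mem hfin
  have hle : (shrunk B).HeightLE (B.height - 1) := by
    intro l hl
    rcases eq_or_ne l [] with rfl | hne
    · simp
    · have hn : l.getLast hne ∈ (shrunk B).nodes := hl.2 _ (List.getLast_mem hne)
      obtain ⟨n', he, hn'⟩ := extend B hn.1 hn.2
      have hpath : B.CausalPath (l ++ [n']) := by
        constructor
        · refine List.IsChain.append ?_ (List.isChain_singleton _) ?_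
          · exact hl.1.imp (fun a b h => edge_mono B h)
          · intro x hx y hy
            rw [List.getLast?_eq_getLast hne] at hx
            simp only [Option.mem_def, Option.some_inj] at hx
            simp only [List.head?_cons, Option.mem_def, Option.some_inj] at hy
            subst hx hy
            exact he
        · intro m hm
          rcases List.mem_append.mp hm with hm | hm
          · exact (hl.2 m hm).1
          · simp only [List.mem_singleton] at hm
            rw [hm]; exact hn'
      have hlen := hmem _ hpath
      simp only [List.length_append, List.length_singleton] at hlen
      omega
  have : (shrunk B).height ≤ B.height - 1 := Nat.sInf_le hle
  omega

end ShrinkAux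

/-- Given a bundle `B` of finite nonzero height, removing the removable
last nodes of strand prefixes yields a subgraph `B'` which is again a bundle, satisfies
`B' ↦ B` (each strand its own agent), and has height strictly less than that of `B`. -/
theorem shrink_bundle {M : Type} {S : StrandSpace M} (B : S.Bundle)
    (hfin : B.FiniteHeight) (hnz : 0 < B.height) :
    ∃ B' : S.Bundle,
      B'.nodes = B.nodes \ {n | Removable B n} ∧
      (∀ n1 n2, B'.comm n1 n2 ↔ B.comm n1 n2 ∧ n1 ∈ B'.nodes ∧ n2 ∈ B'.nodes) ∧
      Step (id : S.Strand → S.Strand) B' B ∧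
      B'.height < B.height :=
  ⟨ShrinkAux.shrunk B, rfl, fun _ _ => Iff.rfl, ShrinkAux.step_shrunk B,
    ShrinkAux.height_lt B hfin hnz⟩
end

section
/- There is no agent assignment A and A-history-preserving translation T from strand spaces to strand systems such that the strand system R_1 is in the image of T, where R_1 is the strand system over agents {1,2,3} generated by the history sets V_1 = {⟨⟩, ⟨recv(u)⟩, ⟨recv(u),sent(v)⟩}, V_2 = {⟨⟩, ⟨sent(u)⟩, ⟨sent(x)⟩, ⟨sent(u),recv(v)⟩, ⟨sent(x),recv(y)⟩}, V_3 = {⟨⟩, ⟨recv(x)⟩, ⟨recv(x),sent(y)⟩}, with x, y, u, v distinct messages. -/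
open StrandPaper StrandPaper.StrandSpace

/-- The set of events appearing at nodes of `B` lying on strands assigned to agent `a`. -/
def agentEvents {M α : Type} {S : StrandSpace M} (A : S.Strand → α) (B : S.Bundle)
    (a : α) : Set (Bool × M) :=
  {e | ∃ s i, A s = a ∧ (s, i) ∈ B.nodes ∧ S.term (s, i) = some e}

/-- An `A`-history preserving translation of `S` yields `R`: (i) every agent history of
every run of `R` corresponds to the agent's events in some bundle of `S`; (ii) every
finite-height bundle's agent events arise as some agent history in some run of `R`. -/
def HistPreserving {M α : Type} (S : StrandSpace M) (A : S.Strand → α)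
    (R : Set (Run α M)) : Prop :=
  (∀ a : α, ∀ r ∈ R, ∀ m : ℕ, ∃ B : S.Bundle,
      {e | e ∈ r m a} = agentEvents A B a) ∧
  (∀ a : α, ∀ B : S.Bundle, B.FiniteHeight →
      ∃ r ∈ R, ∃ m : ℕ, {e | e ∈ r m a} = agentEvents A B a)

/-- The generating history sets of the system `R_1`: agents `0, 1, 2` play the roles of
agents `1, 2, 3` of the paper. -/
def V1 {M : Type} (u v x y : M) : Fin 3 → Set (List (Bool × M))
  | 0 => {[], [(false, u)], [(false, u), (true, v)]}
  | 1 => {[], [(true, u)], [(true, x)], [(true, u), (false, v)], [(true, x), (false, y)]}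
  | 2 => {[], [(false, x)], [(false, x), (true, y)]}

open StrandPaper StrandPaper.StrandSpace

private lemma no_edge_trans {β : Type*} {rel : β → β → Prop} (h : ∀ a b, ¬ rel a b) :
    ∀ n, ¬ Relation.TransGen rel n n := by
  intro n hn
  cases hn with
  | single h1 => exact h _ _ h1
  | tail _ h1 => exact h _ _ h1

private lemma mem_one {M : Type} {S : StrandSpace M} (B : S.Bundle) (s : S.Strand) :
    ∀ i, (s, i) ∈ B.nodes → (s, 1) ∈ B.nodes := by
  intro i
  induction i with
  | zero =>
    intro h
    have h1 := (B.nodes_valid _ h).1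
    simp [StrandSpace.IsNode] at h1
  | succ n ih =>
    intro h
    rcases Nat.eq_zero_or_pos n with hn | hn
    · subst hn; exact h
    · refine ih (B.succ_closed (s, n) (s, n + 1) ?_ h)
      have hv := B.nodes_valid _ h
      exact ⟨rfl, rfl, ⟨hn, Nat.le_of_succ_le hv.2⟩, hv⟩

private lemma first_positive {M : Type} {S : StrandSpace M} {A : S.Strand → Fin 3}
    (B : S.Bundle) (w : M)
    (hB : ({(true, w)} : Set (Bool × M)) = agentEvents A B 1) :
    ∃ s : S.Strand, A s = 1 ∧ (s, 1) ∈ B.nodes ∧ S.term (s, 1) = some (true, w) := by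
  have hmem : ((true, w) : Bool × M) ∈ agentEvents A B 1 := by
    rw [← hB]; exact rfl
  obtain ⟨s, i, hA, hnode, hterm⟩ := hmem
  have h1 : (s, 1) ∈ B.nodes := mem_one B s i hnode
  have hvalid := B.nodes_valid _ h1
  have hlen : 0 < (S.tr s).length := Nat.lt_of_lt_of_le Nat.zero_lt_one hvalid.2
  have hterm1 : S.term (s, 1) = some ((S.tr s).get ⟨0, hlen⟩) := by
    simp [StrandSpace.term, List.getElem?_eq_getElem hlen]
  have he : ((S.tr s).get ⟨0, hlen⟩) ∈ agentEvents A B 1 := ⟨s, 1, hA, h1, hterm1⟩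
  rw [← hB] at he
  have : (S.tr s).get ⟨0, hlen⟩ = (true, w) := he
  exact ⟨s, hA, h1, by rw [hterm1, this]⟩

private lemma run_in_R {M : Type} (u v x y w : M) (hw : w = u ∨ w = x) :
    (fun (m : ℕ) (a : Fin 3) => if m = 0 then [] else if a = 1 then [(true, w)] else [])
      ∈ generated (V1 u v x y) := by
  refine ⟨?_, ?_, ?_, ?_⟩
  · intro a m
    by_cases hm : m = 0
    · simp only [hm, if_pos rfl]
      fin_cases a <;> simp [V1]
    · simp only [if_neg hm]
      by_cases ha : a = 1
      · subst ha
        simp only [if_pos rfl]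
        rcases hw with h | h <;> subst h <;> simp [V1]
      · simp only [if_neg ha]
        fin_cases a <;> simp_all [V1]
  · intro a m z hz
    dsimp only at hz
    split_ifs at hz <;> simp_all
  · intro a; simp
  · intro a m
    by_cases hm : m = 0
    · subst hm
      by_cases ha : a = 1
      · subst ha; right; exact ⟨(true, w), by simp⟩
      · left; simp [ha]
    · left; simp [hm]

private def twoBundle {M : Type} {S : StrandSpace M} (su sx : S.Strand)
    (hvu : S.IsNode (su, 1)) (hvx : S.IsNode (sx, 1))
    (hpu : ∀ w, S.term (su, 1) ≠ some (false, w))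
    (hpx : ∀ w, S.term (sx, 1) ≠ some (false, w)) : S.Bundle where
  nodes := {(su, 1), (sx, 1)}
  comm := fun _ _ => False
  nodes_valid := by
    intro n hn
    simp only [Set.mem_insert_iff, Set.mem_singleton_iff] at hn
    rcases hn with h | h <;> subst h <;> assumption
  comm_mem := fun _ _ h => h.elim
  recv_unique := by
    intro n2 hn2 w hterm
    simp only [Set.mem_insert_iff, Set.mem_singleton_iff] at hn2
    rcases hn2 with h | h <;> subst h
    · exact absurd hterm (hpu w)
    · exact absurd hterm (hpx w)
  succ_closed := by
    rintro n1 n2 ⟨_, hadd, hv1, _⟩ hn2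
    exfalso
    simp only [Set.mem_insert_iff, Set.mem_singleton_iff] at hn2
    have h1 : n2.2 = 1 := by rcases hn2 with h | h <;> subst h <;> rfl
    have := hv1.1
    omega
  acyclic := by
    intro n
    apply no_edge_trans
    rintro a b (h | ⟨⟨_, hadd, hv1, _⟩, _, hb⟩)
    · exact h
    · simp only [Set.mem_insert_iff, Set.mem_singleton_iff] at hb
      have h1 : b.2 = 1 := by rcases hb with h | h <;> subst h <;> rfl
      have := hv1.1
      omega

private lemma twoBundle_finiteHeight {M : Type} {S : StrandSpace M} (su sx : S.Strand)
    (hvu : S.IsNode (su, 1)) (hvx : S.IsNode (sx, 1))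
    (hpu : ∀ w, S.term (su, 1) ≠ some (false, w))
    (hpx : ∀ w, S.term (sx, 1) ≠ some (false, w)) :
    (twoBundle su sx hvu hvx hpu hpx).FiniteHeight := by
  refine ⟨0, ?_⟩
  rintro l ⟨hch, -⟩
  match l with
  | [] => simp
  | [a] => simp
  | a :: b :: t =>
    exfalso
    have hedge := (List.isChain_cons_cons.mp hch).1
    rcases hedge with h | ⟨⟨_, hadd, hv1, _⟩, _, hb⟩
    · exact h
    · simp only [twoBundle, Set.mem_insert_iff, Set.mem_singleton_iff] at hb
      have h1 : b.2 = 1 := by rcases hb with h | h <;> subst h <;> rfl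
      have := hv1.1
      omega


/-- There is no agent assignment `A` and `A`-history preserving translation
`T` from strand spaces to strand systems such that `R_1` (the system generated by
`V1`) is in the image of `T`. -/
theorem R1_not_in_image {M : Type} (u v x y : M)
    (huv : u ≠ v) (hux : u ≠ x) (huy : u ≠ y) (hvx : v ≠ x) (hvy : v ≠ y) (hxy : x ≠ y) :
    ¬ ∃ (S : StrandSpace M) (A : S.Strand → Fin 3),
        HistPreserving S A (generated (V1 u v x y)) := by
  rintro ⟨S, A, h1, h2⟩
  obtain ⟨Bu, hBu⟩ := h1 1 _ (run_in_R u v x y u (Or.inl rfl)) 1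
  have hBu' : ({(true, u)} : Set (Bool × M)) = agentEvents A Bu 1 := by
    rw [← hBu]; ext e; simp
  obtain ⟨su, hAu, hsu, htu⟩ := first_positive Bu u hBu'
  obtain ⟨Bx, hBx⟩ := h1 1 _ (run_in_R u v x y x (Or.inr rfl)) 1
  have hBx' : ({(true, x)} : Set (Bool × M)) = agentEvents A Bx 1 := by
    rw [← hBx]; ext e; simp
  obtain ⟨sx, hAx, hsx, htx⟩ := first_positive Bx x hBx'
  have hvu := Bu.nodes_valid _ hsu
  have hvx' := Bx.nodes_valid _ hsx
  have hpu : ∀ w, S.term (su, 1) ≠ some (false, w) := by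
    intro w h; rw [htu] at h; simp at h
  have hpx : ∀ w, S.term (sx, 1) ≠ some (false, w) := by
    intro w h; rw [htx] at h; simp at h
  obtain ⟨r, hrR, m, hset⟩ :=
    h2 1 (twoBundle su sx hvu hvx' hpu hpx)
      (twoBundle_finiteHeight su sx hvu hvx' hpu hpx)
  have hu' : ((true, u) : Bool × M) ∈ r m 1 := by
    have hmem : ((true, u) : Bool × M) ∈ agentEvents A (twoBundle su sx hvu hvx' hpu hpx) 1 :=
      ⟨su, 1, hAu, by simp [twoBundle], htu⟩
    rw [← hset] at hmem; exact hmem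
  have hx' : ((true, x) : Bool × M) ∈ r m 1 := by
    have hmem : ((true, x) : Bool × M) ∈ agentEvents A (twoBundle su sx hvu hvx' hpu hpx) 1 :=
      ⟨sx, 1, hAx, by simp [twoBundle], htx⟩
    rw [← hset] at hmem; exact hmem
  have hV : r m 1 ∈ V1 u v x y 1 := hrR.1 1 m
  simp only [V1, Set.mem_insert_iff, Set.mem_singleton_iff] at hV
  rcases hV with h | h | h | h | h <;> rw [h] at hu' hx' <;> simp_all
end

section
/- The set of runs R(P, τ_P, I_0) generated by a joint protocol P with the strand transition function τ_P from the initial global state where every agent has empty history is a strand system; specifically, a run r is consistent with P given τ_P with r(0) empty if and only if r satisfies MP1 (with V_a the set of a's local states arising in R(P,τ_P,I_0)), MP2, and MP3. -/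
open StrandPaper

/-- An action is `send u` (`some u`) or `no-op` (`none`). -/
abbrev ProtoAction (M : Type) := Option M

/-- The strand transition function `τ_P`: given a joint action, each agent's history
either stays put, or appends `sent(u)` provided its action is `send u`, or appends
`recv(u)` provided `sent(u)` appears in some agent's new history. -/
def TauStep {M α : Type} (act : α → ProtoAction M) (σ σ' : α → List (Bool × M)) : Prop :=
  ∀ a, σ' a = σ a ∨
    (∃ u, act a = some u ∧ σ' a = σ a ++ [(true, u)]) ∨
    (∃ u, σ' a = σ a ++ [(false, u)] ∧ ∃ b, (true, u) ∈ σ' b)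

/-- A run is consistent with the joint protocol `P` given `τ_P`: every round is the
result of a joint action allowed by `P` at the current global state. -/
def Consistent {M α : Type} (P : α → List (Bool × M) → Set (ProtoAction M))
    (r : Run α M) : Prop :=
  ∀ m : ℕ, ∃ act : α → ProtoAction M,
    (∀ a, act a ∈ P a (r m a)) ∧ TauStep act (r m) (r (m + 1))

/-- `R(P, τ_P, I_0)`: all runs consistent with `P` given `τ_P` starting from the global
state where every agent has the empty history. -/
def protoSystem {M α : Type} (P : α → List (Bool × M) → Set (ProtoAction M)) :
    Set (Run α M) :=
  {r | Consistent P r ∧ ∀ a, r 0 a = []}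

section Aux
variable {M α : Type} (P : α → List (Bool × M) → Set (ProtoAction M))

lemma proto_step {r : Run α M} (hr : r ∈ protoSystem P) (m : ℕ) (a : α) :
    r (m + 1) a = r m a ∨ ∃ e, r (m + 1) a = r m a ++ [e] := by
  obtain ⟨act, _, hτ⟩ := hr.1 m
  rcases hτ a with h | ⟨u, _, h⟩ | ⟨u, h, _⟩
  · exact Or.inl h
  · exact Or.inr ⟨_, h⟩
  · exact Or.inr ⟨_, h⟩

lemma proto_mono {r : Run α M} (hr : r ∈ protoSystem P) {e : Bool × M} {a : α}
    {m m' : ℕ} (hm : m ≤ m') (he : e ∈ r m a) : e ∈ r m' a := by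
  induction m', hm using Nat.le_induction with
  | base => exact he
  | succ n hn ih =>
    rcases proto_step P hr n a with h | ⟨e', h⟩
    · rw [h]; exact ih
    · rw [h]; exact List.mem_append_left _ ih

lemma proto_mp2 {r : Run α M} (hr : r ∈ protoSystem P) (a : α) (m : ℕ) (u : M)
    (h : (false, u) ∈ r m a) : ∃ b, (true, u) ∈ r m b := by
  induction m generalizing a with
  | zero => rw [hr.2 a] at h; simp at h
  | succ m ih =>
    obtain ⟨act, _, hτ⟩ := hr.1 m
    rcases hτ a with h' | ⟨v, _, h'⟩ | ⟨v, h', b, hb⟩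
    · rw [h'] at h
      obtain ⟨b, hb⟩ := ih a h
      exact ⟨b, proto_mono P hr (Nat.le_succ m) hb⟩
    · rw [h'] at h
      rcases List.mem_append.mp h with h'' | h''
      · obtain ⟨b, hb⟩ := ih a h''
        exact ⟨b, proto_mono P hr (Nat.le_succ m) hb⟩
      · simp at h''
    · rw [h'] at h
      rcases List.mem_append.mp h with h'' | h''
      · obtain ⟨b, hb⟩ := ih a h''
        exact ⟨b, proto_mono P hr (Nat.le_succ m) hb⟩
      · simp at h''
        exact ⟨b, h'' ▸ hb⟩

lemma proto_take {r : Run α M} (hr : r ∈ protoSystem P) (a : α) :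
    ∀ m n, n < (r m a).length →
      ∃ k, r k a = (r m a).take n ∧ r (k + 1) a = (r m a).take (n + 1) := by
  intro m
  induction m with
  | zero => intro n hn; rw [hr.2 a] at hn; simp at hn
  | succ m ih =>
    intro n hn
    rcases proto_step P hr m a with h | ⟨e, h⟩
    · rw [h] at hn ⊢; exact ih n hn
    · rw [h] at hn ⊢
      simp only [List.length_append, List.length_singleton] at hn
      rcases lt_or_eq_of_le (Nat.lt_succ_iff.mp hn) with h' | h'
      · obtain ⟨k, hk1, hk2⟩ := ih n h'
        refine ⟨k, ?_, ?_⟩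
        · rw [List.take_append_of_le_length (le_of_lt h')]; exact hk1
        · rw [List.take_append_of_le_length h']; exact hk2
      · refine ⟨m, ?_, ?_⟩
        · rw [h', List.take_left']
          rfl
        · rw [List.take_of_length_le (by simp [h'])]; exact h

lemma proto_send {r : Run α M} (hr : r ∈ protoSystem P) {a : α}
    {σ : List (Bool × M)} {u : M} {m : ℕ}
    (h : r m a = σ ++ [(true, u)]) : some u ∈ P a σ := by
  have hn : σ.length < (r m a).length := by rw [h]; simp
  obtain ⟨k, hk1, hk2⟩ := proto_take P hr a m σ.length hn
  rw [h] at hk1 hk2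
  rw [List.take_left' rfl] at hk1
  rw [List.take_of_length_le (by simp)] at hk2
  obtain ⟨act, hact, hτ⟩ := hr.1 k
  rcases hτ a with h' | ⟨v, hv, h'⟩ | ⟨v, h', _⟩
  · rw [hk2, hk1] at h'; simp at h'
  · rw [hk2, hk1] at h'
    have huv : (true, u) = ((true, v) : Bool × M) := by
      have := List.append_cancel_left h'
      simpa using this
    have : v = u := by simpa using huv.symm
    subst this
    rw [← hv, ← hk1]
    exact hact a
  · rw [hk2, hk1] at h'
    have := List.append_cancel_left h'
    simp at this

end Aux

/-- `R(P, τ_P, I_0)` is a strand system; specifically, a run `r` is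
consistent with `P` given `τ_P` with empty initial state iff `r` satisfies MP1 (with
`V_a` the local states of `a` arising in `R(P, τ_P, I_0)`), MP2 and MP3. -/
theorem protoSystem_is_strand_system {M α : Type}
    (P : α → List (Bool × M) → Set (ProtoAction M))
    (hne : ∀ a σ, (P a σ).Nonempty) :
    IsStrandSystem (protoSystem P) ∧
    ∀ r : Run α M, r ∈ protoSystem P ↔
      MP (fun a => {h | ∃ r' ∈ protoSystem P, ∃ m : ℕ, r' m a = h}) r := by
  classical
  set V : α → Set (List (Bool × M)) :=
    fun a => {h | ∃ r' ∈ protoSystem P, ∃ m : ℕ, r' m a = h} with hV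
  have key : ∀ r : Run α M, r ∈ protoSystem P ↔ MP V r := by
    intro r
    constructor
    · intro hr
      refine ⟨fun a m => ⟨r, hr, m, rfl⟩, proto_mp2 P hr, hr.2, fun a m => proto_step P hr m a⟩
    · rintro ⟨h1, h2, h3, h4⟩
      refine ⟨?_, h3⟩
      intro m
      refine ⟨fun a => if h : ∃ u, r (m + 1) a = r m a ++ [(true, u)]
        then some h.choose else (hne a (r m a)).choose, fun a => ?_, fun a => ?_⟩
      · dsimp only
        by_cases h : ∃ u, r (m + 1) a = r m a ++ [(true, u)]
        · rw [dif_pos h]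
          obtain ⟨r', hr', m', hm'⟩ := h1 a (m + 1)
          rw [h.choose_spec] at hm'
          exact proto_send P hr' hm'
        · rw [dif_neg h]
          exact (hne a (r m a)).choose_spec
      · rcases h4 a m with heq | ⟨⟨b, u⟩, he⟩
        · exact Or.inl heq
        · cases b with
          | true =>
            refine Or.inr (Or.inl ⟨u, ?_, he⟩)
            have hex : ∃ u, r (m + 1) a = r m a ++ [(true, u)] := ⟨u, he⟩
            dsimp only
            rw [dif_pos hex]
            have h5 := he.symm.trans hex.choose_spec
            have h6 : u = hex.choose := by
              have := List.append_cancel_left h5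
              simpa using this
            rw [h6]
          | false =>
            refine Or.inr (Or.inr ⟨u, he, ?_⟩)
            exact h2 a (m + 1) u (he ▸ List.mem_append_right _ (by simp))
  constructor
  · exact ⟨V, Set.ext key⟩
  · exact key
end

section
/- Consider the strand space Σ = {s_i : i ∈ ℤ} with tr(s_i) = ⟨-u_i, +u_{i+1}⟩ for distinct messages u_i. The entire graph (all nodes with edges ⟨s_i,2⟩ → ⟨s_{i+1},1⟩ and ⟨s_i,1⟩ ⇒ ⟨s_i,2⟩) satisfies conditions B2–B4 (every receive has a unique sender, ⇒-closure, acyclicity) and hence is an infinite bundle, and it has infinite height: for every k there is a causal path of length at least k. -/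
open StrandPaper StrandPaper.StrandSpace

/-- The strand space `Σ = {s_i : i ∈ ℤ}` with `tr(s_i) = ⟨-u_i, +u_{i+1}⟩`. -/
def zSpace {M : Type} (u : ℤ → M) : StrandSpace M where
  Strand := ℤ
  tr := fun i => [(false, u i), (true, u (i + 1))]

section ZBundle

variable {M : Type} (u : ℤ → M)

lemma zIsNode (i : ℤ) (k : ℕ) : (zSpace u).IsNode (i, k) ↔ 1 ≤ k ∧ k ≤ 2 := by
  simp [StrandSpace.IsNode, zSpace]

lemma zterm1 (i : ℤ) : (zSpace u).term (i, 1) = some (false, u i) := by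
  simp [StrandSpace.term, zSpace]

lemma zterm2 (i : ℤ) : (zSpace u).term (i, 2) = some (true, u (i + 1)) := by
  simp [StrandSpace.term, zSpace]

def zComm (n1 n2 : ℤ × ℕ) : Prop :=
  (zSpace u).IsNode n1 ∧ (zSpace u).IsNode n2 ∧ n1.2 = 2 ∧ n2.2 = 1 ∧ n2.1 = n1.1 + 1

def zWeight (n : ℤ × ℕ) : ℤ := 2 * n.1 + n.2

lemma zSucc_weight {n1 n2 : ℤ × ℕ} (h : (zSpace u).SuccEdge n1 n2) :
    zWeight n2 = zWeight n1 + 1 := by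
  obtain ⟨h1, h2, _, _⟩ := h
  simp [zWeight, h1, h2]; push_cast; ring

lemma zComm_weight {n1 n2 : ℤ × ℕ} (h : zComm u n1 n2) :
    zWeight n2 = zWeight n1 + 1 := by
  obtain ⟨_, _, h1, h2, h3⟩ := h
  simp [zWeight, h1, h2, h3]; ring

def zBundle : (zSpace u).Bundle where
  nodes := {n | (zSpace u).IsNode n}
  comm := zComm u
  nodes_valid := fun _ hn => hn
  comm_mem := by
    rintro ⟨i, k⟩ ⟨j, l⟩ ⟨h1, h2, hk, hl, hj⟩
    refine ⟨h1, h2, u ((show ℤ from i) + 1), ?_, ?_⟩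
    · dsimp at hk; subst hk; exact zterm2 u i
    · dsimp at hl hj; subst hl; subst hj; exact zterm1 u _
  recv_unique := by
    rintro ⟨j, l⟩ hn v hv
    have hl : l = 1 := by
      rcases (zIsNode u j l).1 hn with ⟨h1, h2⟩
      interval_cases l
      · rfl
      · simp [StrandSpace.term, zSpace] at hv
    subst hl
    refine ⟨((show ℤ from j) - 1, 2), ⟨?_, ?_, rfl, rfl, by dsimp; exact (sub_add_cancel _ _).symm⟩, ?_⟩
    · exact (zIsNode u _ _).2 ⟨by omega, by omega⟩
    · exact hn
    · rintro ⟨i, k⟩ ⟨_, _, hk, _, hj⟩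
      dsimp at hk hj
      subst hk
      have hj' : (show ℤ from j) = (show ℤ from i) + 1 := hj
      have : (show ℤ from i) = (show ℤ from j) - 1 := by omega
      simp [this]; rfl
  succ_closed := fun _ _ h _ => h.2.2.1
  acyclic := by
    intro n h
    have key : ∀ m1 m2, Relation.TransGen
        (fun a b => zComm u a b ∨ ((zSpace u).SuccEdge a b ∧ a ∈ {n | (zSpace u).IsNode n}
          ∧ b ∈ {n | (zSpace u).IsNode n})) m1 m2 → zWeight m1 < zWeight m2 := by
      intro m1 m2 hT
      induction hT with
      | single h => rcases h with h | ⟨h, _, _⟩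
                    · rw [zComm_weight u h]; omega
                    · rw [zSucc_weight u h]; omega
      | tail _ h ih => rcases h with h | ⟨h, _, _⟩
                       · rw [zComm_weight u h]; omega
                       · rw [zSucc_weight u h]; omega
    exact absurd (key n n h) (lt_irrefl _)

def zPath (n : ℕ) : ℤ × ℕ := (((n / 2 : ℕ) : ℤ), n % 2 + 1)

lemma zPath_edge (m : ℕ) : (zBundle u).edge (zPath m) (zPath (m + 1)) := by
  rcases Nat.even_or_odd m with ⟨t, ht⟩ | ⟨t, ht⟩
  · have h1 : m / 2 = t := by omega
    have h2 : (m + 1) / 2 = t := by omega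
    have h3 : m % 2 = 0 := by omega
    have h4 : (m + 1) % 2 = 1 := by omega
    have e1 : zPath m = ((t : ℤ), 1) := by simp [zPath, h1, h3]
    have e2 : zPath (m + 1) = ((t : ℤ), 2) := by simp [zPath, h2, h4]
    rw [e1, e2]
    have hN1 : (zSpace u).IsNode ((t : ℤ), 1) := (zIsNode u _ _).2 ⟨le_refl 1, by omega⟩
    have hN2 : (zSpace u).IsNode ((t : ℤ), 2) := (zIsNode u _ _).2 ⟨by omega, le_refl 2⟩
    exact Or.inr ⟨⟨rfl, rfl, hN1, hN2⟩, hN1, hN2⟩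
  · have h1 : m / 2 = t := by omega
    have h2 : (m + 1) / 2 = t + 1 := by omega
    have h3 : m % 2 = 1 := by omega
    have h4 : (m + 1) % 2 = 0 := by omega
    have e1 : zPath m = ((t : ℤ), 2) := by simp [zPath, h1, h3]
    have e2 : zPath (m + 1) = ((t : ℤ) + 1, 1) := by simp [zPath, h2, h4]
    rw [e1, e2]
    have hN1 : (zSpace u).IsNode ((t : ℤ), 2) := (zIsNode u _ _).2 ⟨by omega, le_refl 2⟩
    have hN2 : (zSpace u).IsNode ((t : ℤ) + 1, 1) := (zIsNode u _ _).2 ⟨le_refl 1, by omega⟩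
    exact Or.inl ⟨hN1, hN2, rfl, rfl, rfl⟩

end ZBundle

/-- For distinct messages `u_i`, the entire graph of `zSpace u` (all
nodes, with `→` edges `⟨s_i,2⟩ → ⟨s_{i+1},1⟩` and the `⇒` edges of each strand)
satisfies B2–B4 and hence is an infinite bundle, and it has infinite height: for every
`k`, it is not of height at most `k` (there is a causal path of length exceeding `k`). -/
theorem infinite_bundle_of_infinite_height {M : Type} (u : ℤ → M)
    (hu : Function.Injective u) :
    ∃ B : (zSpace u).Bundle,
      B.nodes = {n | (zSpace u).IsNode n} ∧
      (∀ (i j : ℤ) (k l : ℕ), B.comm (i, k) (j, l) ↔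
        ((zSpace u).IsNode (i, k) ∧ (zSpace u).IsNode (j, l) ∧
          k = 2 ∧ l = 1 ∧ j = i + 1)) ∧
      ∀ k : ℕ, ¬ B.HeightLE k := by
  refine ⟨zBundle u, rfl, ?_, ?_⟩
  · intro i j k l
    constructor
    · rintro ⟨h1, h2, hk, hl, hj⟩; exact ⟨h1, h2, hk, hl, hj⟩
    · rintro ⟨h1, h2, hk, hl, hj⟩; exact ⟨h1, h2, hk, hl, hj⟩
  · intro k hk
    have hpath : (zBundle u).CausalPath ((List.range (k + 2)).map (zPath)) := by
      constructor
      · refine (List.isChain_map zPath).2 ?_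
        exact (List.isChain_range_succ _ _).mpr (fun m _ => zPath_edge u m)
      · intro n hn
        have hn := List.mem_map.1 hn
        obtain ⟨m, _, rfl⟩ := hn
        exact (zIsNode u _ _).2 ⟨by omega, by omega⟩
    have := hk _ hpath
    change ((List.range (k + 2)).map zPath).length ≤ k + 1 at this
    simp at this
end
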